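/- In the setting of the state-evolution sequence Σ^t (with σ² > 0, ε_n ∈ (0,1), L > 0, and MMSE denoisers g_n^t), assume additionally that each covariance has the form R_n = bdiag(ρ_{1n}·I_M, …, ρ_{Kn}·I_M) with scalars ρ_{kn} > 0. Then for every t ≥ 0 there exist scalars τ_1^t, …, τ_K^t > 0 such that Σ^t = bdiag(τ_1^t·I_M, …, τ_K^t·I_M), i.e., each diagonal block of the state is a positive scalar multiple of the M×M identity. -/

import Mathlib

open MeasureTheory Matrix
open scoped ComplexOrder

noncomputable section

/-- Circularly-symmetric complex Gaussian density
`φ_A(ξ) = π^{-d} (det A)^{-1} exp(-ξ^H A^{-1} ξ)` on `ℂ^ι`. -/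
def gaussDensity {ι : Type*} [Fintype ι] [DecidableEq ι] (A : Matrix ι ι ℂ) (ξ : ι → ℂ) : ℂ :=
  ((Real.pi : ℂ) ^ (Fintype.card ι))⁻¹ * (A.det)⁻¹ *
    Complex.exp (-(star ξ ⬝ᵥ (A⁻¹ *ᵥ ξ)))

/-- The complex Gaussian measure `N_ℂ(0, A)` on `ℂ^ι`, i.e. the measure whose density with
respect to Lebesgue measure on `ℂ^ι ≅ ℝ^{2d}` is `φ_A`. -/
def gaussMeasure {ι : Type*} [Fintype ι] [DecidableEq ι] (A : Matrix ι ι ℂ) :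
    Measure (ι → ℂ) :=
  volume.withDensity fun ξ => ENNReal.ofReal (gaussDensity A ξ).re

/-- Bernoulli–Gaussian measure `(1-ε)·δ_0 + ε·N_ℂ(0, A)`. -/
def bgMeasure {ι : Type*} [Fintype ι] [DecidableEq ι] (A : Matrix ι ι ℂ) (ε : ℝ) :
    Measure (ι → ℂ) :=
  ENNReal.ofReal (1 - ε) • Measure.dirac 0 + ENNReal.ofReal ε • gaussMeasure A

/-- Scalar factor `θ(ξ) = (1 + ((1-ε)/ε)·(det(R+Σ)/det Σ)·exp(-ξ^H Ω ξ))⁻¹` of the MMSE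
denoiser, with `Ω = Σ⁻¹ - (R+Σ)⁻¹`. -/
def mmseTheta {ι : Type*} [Fintype ι] [DecidableEq ι] (R S : Matrix ι ι ℂ) (ε : ℝ)
    (ξ : ι → ℂ) : ℂ :=
  (1 + (((1 - ε) / ε : ℝ) : ℂ) * ((R + S).det / S.det) *
      Complex.exp (-(star ξ ⬝ᵥ ((S⁻¹ - (R + S)⁻¹) *ᵥ ξ))))⁻¹

/-- MMSE denoiser `g(ξ) = θ(ξ)·R(R+Σ)⁻¹ξ`. -/
def mmseDenoiser {ι : Type*} [Fintype ι] [DecidableEq ι] (R S : Matrix ι ι ℂ) (ε : ℝ)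
    (ξ : ι → ℂ) : ι → ℂ :=
  mmseTheta R S ε ξ • ((R * (R + S)⁻¹) *ᵥ ξ)

open Classical in
/-- `η_I` : sign flip of the coordinates with indices in `I`. -/
def etaFlip {ι : Type*} (I : Set ι) (ξ : ι → ℂ) : ι → ℂ :=
  fun i => if i ∈ I then -ξ i else ξ i

/-- `k`-th `M × M` diagonal block of a matrix indexed by `Fin K × Fin M`
(block `B_k = {k} × Fin M`). -/
def blk {K M : ℕ} (A : Matrix (Fin K × Fin M) (Fin K × Fin M) ℂ) (k : Fin K) :
    Matrix (Fin M) (Fin M) ℂ :=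
  Matrix.of fun a b => A (k, a) (k, b)

/-- The AMP state-evolution sequence: `Σ^0 = σ²·I + (1/L)·∑ₙ Rₙ` and
`Σ^{t+1} = σ²·I + (1/L)·∑ₙ E[(gₙᵗ(xₙ+vᵗ)-xₙ)(gₙᵗ(xₙ+vᵗ)-xₙ)^H]`, where
`xₙ ∼ (1-εₙ)·δ_0 + εₙ·N_ℂ(0,Rₙ)` independent of `vᵗ ∼ N_ℂ(0,Σᵗ)` and `gₙᵗ` is the
MMSE denoiser for `(Rₙ, Σᵗ, εₙ)`; the expectations are taken entrywise. -/
def stateSeq {ι : Type*} [Fintype ι] [DecidableEq ι] {N : ℕ}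
    (σ2 L : ℝ) (ε : Fin N → ℝ) (R : Fin N → Matrix ι ι ℂ) : ℕ → Matrix ι ι ℂ
  | 0 => (σ2 : ℂ) • (1 : Matrix ι ι ℂ) + ((1 : ℂ) / (L : ℂ)) • ∑ n, R n
  | t + 1 =>
      (σ2 : ℂ) • (1 : Matrix ι ι ℂ) + ((1 : ℂ) / (L : ℂ)) •
        ∑ n, Matrix.of (fun i j =>
          ∫ p : (ι → ℂ) × (ι → ℂ),
            (mmseDenoiser (R n) (stateSeq σ2 L ε R t) (ε n) (p.1 + p.2) i - p.1 i) *
              star (mmseDenoiser (R n) (stateSeq σ2 L ε R t) (ε n) (p.1 + p.2) j - p.1 j)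
            ∂((bgMeasure (R n) (ε n)).prod (gaussMeasure (stateSeq σ2 L ε R t))))

namespace Stmt2Aux

instance gaussMeasure_sfinite {ι : Type*} [Fintype ι] [DecidableEq ι] (A : Matrix ι ι ℂ) :
    SFinite (gaussMeasure A) := by
  unfold gaussMeasure; infer_instance

instance bgMeasure_sfinite {ι : Type*} [Fintype ι] [DecidableEq ι] (A : Matrix ι ι ℂ) (ε' : ℝ) :
    SFinite (bgMeasure A ε') := by
  unfold bgMeasure; infer_instance

lemma pm_mul_self {u : ℂ} (h : u = 1 ∨ u = -1) : u * u = 1 := by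
  rcases h with h | h <;> simp [h]

lemma pm_star {u : ℂ} (h : u = 1 ∨ u = -1) : star u = u := by
  rcases h with h | h <;> simp [h]

variable {I : Type*} [Fintype I]

/-- Signed within-permutation map `ξ ↦ (i ↦ u i * ξ (π i))` as a measurable equiv. -/
def sp (u : I → ℂ) (hu : ∀ i, u i = 1 ∨ u i = -1) (π : Equiv.Perm I) :
    (I → ℂ) ≃ᵐ (I → ℂ) where
  toEquiv :=
  { toFun := fun ξ i => u i * ξ (π i)
    invFun := fun ξ i => u (π.symm i) * ξ (π.symm i)
    left_inv := fun ξ => by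
      funext i
      simp only [Equiv.apply_symm_apply, ← mul_assoc, pm_mul_self (hu _), one_mul]
    right_inv := fun ξ => by
      funext i
      simp only [Equiv.symm_apply_apply, ← mul_assoc, pm_mul_self (hu _), one_mul] }
  measurable_toFun :=
    measurable_pi_lambda _ fun i => by exact (measurable_pi_apply (π i) : Measurable fun ξ : I → ℂ => ξ (π i)).const_mul (u i)
  measurable_invFun :=
    measurable_pi_lambda _ fun i => (measurable_pi_apply (π.symm i)).const_mul _

@[simp] lemma sp_apply (u : I → ℂ) (hu : ∀ i, u i = 1 ∨ u i = -1) (π : Equiv.Perm I)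
    (ξ : I → ℂ) (i : I) : sp u hu π ξ i = u i * ξ (π i) := rfl

lemma sp_zero (u : I → ℂ) (hu : ∀ i, u i = 1 ∨ u i = -1) (π : Equiv.Perm I) :
    sp u hu π 0 = 0 := by
  funext i; simp

lemma sp_add (u : I → ℂ) (hu : ∀ i, u i = 1 ∨ u i = -1) (π : Equiv.Perm I) (ξ η : I → ℂ) :
    sp u hu π (ξ + η) = sp u hu π ξ + sp u hu π η := by
  funext i; simp [mul_add]

lemma sp_volume (u : I → ℂ) (hu : ∀ i, u i = 1 ∨ u i = -1) (π : Equiv.Perm I) :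
    MeasurePreserving (sp u hu π) (volume : Measure (I → ℂ)) volume := by
  have h1 : MeasurePreserving (fun (ξ : I → ℂ) i => ξ (π i)) volume volume :=
    volume_preserving_arrowCongr' π.symm (MeasurableEquiv.refl ℂ) (MeasurePreserving.id _)
  have hco : ∀ i : I, MeasurePreserving (fun z : ℂ => u i * z) volume volume := by
    intro i
    rcases hu i with h | h
    · rw [h]
      simp only [one_mul]
      exact MeasurePreserving.id _
    · rw [h]
      simp only [neg_one_mul]
      exact Measure.measurePreserving_neg _
  have h2 : MeasurePreserving (fun (ξ : I → ℂ) i => u i * ξ i) volume volume :=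
    volume_preserving_pi hco
  exact h2.comp h1

variable {K M : ℕ}

/-- Block-scalar diagonal matrix. -/
def Dg (M : ℕ) (f : Fin K → ℂ) : Matrix (Fin K × Fin M) (Fin K × Fin M) ℂ :=
  Matrix.diagonal (fun i => f i.1)

lemma Dg_add (f g : Fin K → ℂ) : Dg M f + Dg M g = Dg M (fun k => f k + g k) := by
  unfold Dg; rw [Matrix.diagonal_add]

lemma Dg_sub (f g : Fin K → ℂ) : Dg M f - Dg M g = Dg M (fun k => f k - g k) := by
  unfold Dg; rw [Matrix.diagonal_sub]

lemma Dg_mul (f g : Fin K → ℂ) : Dg M f * Dg M g = Dg M (fun k => f k * g k) := by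
  unfold Dg; rw [Matrix.diagonal_mul_diagonal]

lemma Dg_inv (f : Fin K → ℂ) (hf : ∀ k, f k ≠ 0) :
    (Dg M f)⁻¹ = Dg M (fun k => (f k)⁻¹) := by
  apply Matrix.inv_eq_right_inv
  rw [Dg_mul, ← Matrix.diagonal_one]
  unfold Dg
  exact congrArg Matrix.diagonal (funext fun i => mul_inv_cancel₀ (hf i.1))

lemma quad_sp (d : Fin K → ℂ) (u : Fin K × Fin M → ℂ) (hu : ∀ i, u i = 1 ∨ u i = -1)
    (π : Equiv.Perm (Fin K × Fin M)) (hπ : ∀ i, (π i).1 = i.1) (ξ : Fin K × Fin M → ℂ) :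
    star (sp u hu π ξ) ⬝ᵥ (Dg M d *ᵥ sp u hu π ξ) = star ξ ⬝ᵥ (Dg M d *ᵥ ξ) := by
  unfold Dg
  simp only [dotProduct, Matrix.mulVec_diagonal, Pi.star_apply, sp_apply]
  have hterm : ∀ i : Fin K × Fin M,
      star (u i * ξ (π i)) * (d i.1 * (u i * ξ (π i)))
        = d (π i).1 * (star (ξ (π i)) * ξ (π i)) := by
    intro i
    rw [show (d i.1 : ℂ) = d (π i).1 from by rw [hπ i], star_mul', pm_star (hu i)]
    calc u i * star (ξ (π i)) * (d (π i).1 * (u i * ξ (π i)))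
        = (u i * u i) * (d (π i).1 * (star (ξ (π i)) * ξ (π i))) := by ring
      _ = d (π i).1 * (star (ξ (π i)) * ξ (π i)) := by rw [pm_mul_self (hu i), one_mul]
  calc ∑ i, star (u i * ξ (π i)) * (d i.1 * (u i * ξ (π i)))
      = ∑ i, d (π i).1 * (star (ξ (π i)) * ξ (π i)) := by
        exact Finset.sum_congr rfl fun i _ => hterm i
    _ = ∑ i, d i.1 * (star (ξ i) * ξ i) :=
        Equiv.sum_comp π (fun j => d j.1 * (star (ξ j) * ξ j))
    _ = ∑ i, star (ξ i) * (d i.1 * ξ i) := by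
        exact Finset.sum_congr rfl fun i _ => by ring

lemma theta_sp (r s : Fin K → ℂ) (ε' : ℝ) (hs : ∀ k, s k ≠ 0) (hrs : ∀ k, r k + s k ≠ 0)
    (u : Fin K × Fin M → ℂ) (hu : ∀ i, u i = 1 ∨ u i = -1)
    (π : Equiv.Perm (Fin K × Fin M)) (hπ : ∀ i, (π i).1 = i.1) (ξ : Fin K × Fin M → ℂ) :
    mmseTheta (Dg M r) (Dg M s) ε' (sp u hu π ξ) = mmseTheta (Dg M r) (Dg M s) ε' ξ := by
  unfold mmseTheta
  rw [Dg_add, Dg_inv _ hs, Dg_inv _ hrs, Dg_sub,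
    quad_sp (fun k => (s k)⁻¹ - (r k + s k)⁻¹) u hu π hπ ξ]

lemma den_sp (r s : Fin K → ℂ) (ε' : ℝ) (hs : ∀ k, s k ≠ 0) (hrs : ∀ k, r k + s k ≠ 0)
    (u : Fin K × Fin M → ℂ) (hu : ∀ i, u i = 1 ∨ u i = -1)
    (π : Equiv.Perm (Fin K × Fin M)) (hπ : ∀ i, (π i).1 = i.1) (ξ : Fin K × Fin M → ℂ)
    (i : Fin K × Fin M) :
    mmseDenoiser (Dg M r) (Dg M s) ε' (sp u hu π ξ) i
      = u i * mmseDenoiser (Dg M r) (Dg M s) ε' ξ (π i) := by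
  unfold mmseDenoiser
  rw [Dg_add, Dg_inv _ hrs, Dg_mul, theta_sp r s ε' hs hrs u hu π hπ ξ]
  unfold Dg
  simp only [Pi.smul_apply, smul_eq_mul, Matrix.mulVec_diagonal, sp_apply]
  rw [show ((π i).1 : Fin K) = i.1 from hπ i]
  ring

lemma gaussDensity_sp (f : Fin K → ℂ) (hf : ∀ k, f k ≠ 0)
    (u : Fin K × Fin M → ℂ) (hu : ∀ i, u i = 1 ∨ u i = -1)
    (π : Equiv.Perm (Fin K × Fin M)) (hπ : ∀ i, (π i).1 = i.1) (ξ : Fin K × Fin M → ℂ) :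
    gaussDensity (Dg M f) (sp u hu π ξ) = gaussDensity (Dg M f) ξ := by
  unfold gaussDensity
  rw [Dg_inv _ hf, quad_sp (fun k => (f k)⁻¹) u hu π hπ ξ]

lemma gaussMeasure_sp (f : Fin K → ℂ) (hf : ∀ k, f k ≠ 0)
    (u : Fin K × Fin M → ℂ) (hu : ∀ i, u i = 1 ∨ u i = -1)
    (π : Equiv.Perm (Fin K × Fin M)) (hπ : ∀ i, (π i).1 = i.1) :
    MeasurePreserving (sp u hu π) (gaussMeasure (Dg M f)) (gaussMeasure (Dg M f)) := by
  refine ⟨(sp u hu π).measurable, ?_⟩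
  ext s hs
  rw [Measure.map_apply (sp u hu π).measurable hs]
  unfold gaussMeasure
  rw [withDensity_apply _ (hs.preimage (sp u hu π).measurable), withDensity_apply _ hs]
  calc ∫⁻ x in (sp u hu π) ⁻¹' s, ENNReal.ofReal (gaussDensity (Dg M f) x).re ∂volume
      = ∫⁻ x in (sp u hu π) ⁻¹' s,
          ENNReal.ofReal (gaussDensity (Dg M f) (sp u hu π x)).re ∂volume := by
        apply lintegral_congr
        intro x
        rw [gaussDensity_sp f hf u hu π hπ x]
    _ = ∫⁻ y in (sp u hu π) '' ((sp u hu π) ⁻¹' s),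
          ENNReal.ofReal (gaussDensity (Dg M f) y).re ∂volume :=
        MeasurePreserving.setLIntegral_comp_emb (sp_volume u hu π)
          (sp u hu π).measurableEmbedding
          (fun ξ => ENNReal.ofReal (gaussDensity (Dg M f) ξ).re) ((sp u hu π) ⁻¹' s)
    _ = ∫⁻ y in s, ENNReal.ofReal (gaussDensity (Dg M f) y).re ∂volume := by
        rw [Set.image_preimage_eq _ (sp u hu π).surjective]

lemma bgMeasure_sp (f : Fin K → ℂ) (hf : ∀ k, f k ≠ 0) (ε' : ℝ)
    (u : Fin K × Fin M → ℂ) (hu : ∀ i, u i = 1 ∨ u i = -1)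
    (π : Equiv.Perm (Fin K × Fin M)) (hπ : ∀ i, (π i).1 = i.1) :
    MeasurePreserving (sp u hu π) (bgMeasure (Dg M f) ε') (bgMeasure (Dg M f) ε') := by
  refine ⟨(sp u hu π).measurable, ?_⟩
  unfold bgMeasure
  rw [Measure.map_add _ _ (sp u hu π).measurable, Measure.map_smul, Measure.map_smul,
    Measure.map_dirac' (sp u hu π).measurable, sp_zero,
    (gaussMeasure_sp f hf u hu π hπ).map_eq]

lemma integral_sp (r s : Fin K → ℂ) (ε' : ℝ) (hr : ∀ k, r k ≠ 0) (hs : ∀ k, s k ≠ 0)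
    (hrs : ∀ k, r k + s k ≠ 0)
    (u : Fin K × Fin M → ℂ) (hu : ∀ i, u i = 1 ∨ u i = -1)
    (π : Equiv.Perm (Fin K × Fin M)) (hπ : ∀ i, (π i).1 = i.1) (i j : Fin K × Fin M) :
    (∫ p : ((Fin K × Fin M) → ℂ) × ((Fin K × Fin M) → ℂ),
        (mmseDenoiser (Dg M r) (Dg M s) ε' (p.1 + p.2) i - p.1 i) *
          star (mmseDenoiser (Dg M r) (Dg M s) ε' (p.1 + p.2) j - p.1 j)
        ∂((bgMeasure (Dg M r) ε').prod (gaussMeasure (Dg M s))))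
    = u i * u j *
      ∫ p : ((Fin K × Fin M) → ℂ) × ((Fin K × Fin M) → ℂ),
        (mmseDenoiser (Dg M r) (Dg M s) ε' (p.1 + p.2) (π i) - p.1 (π i)) *
          star (mmseDenoiser (Dg M r) (Dg M s) ε' (p.1 + p.2) (π j) - p.1 (π j))
        ∂((bgMeasure (Dg M r) ε').prod (gaussMeasure (Dg M s))) := by
  set e := sp u hu π with he
  set μ := (bgMeasure (Dg M r) ε').prod (gaussMeasure (Dg M s)) with hμ
  have hprod : MeasurePreserving (Prod.map e e) μ μ :=
    (bgMeasure_sp r hr ε' u hu π hπ).prod (gaussMeasure_sp s hs u hu π hπ)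
  have step := hprod.integral_comp (e.prodCongr e).measurableEmbedding
    (fun p : ((Fin K × Fin M) → ℂ) × ((Fin K × Fin M) → ℂ) =>
      (mmseDenoiser (Dg M r) (Dg M s) ε' (p.1 + p.2) i - p.1 i) *
        star (mmseDenoiser (Dg M r) (Dg M s) ε' (p.1 + p.2) j - p.1 j))
  rw [← step]
  have hpt : ∀ p : ((Fin K × Fin M) → ℂ) × ((Fin K × Fin M) → ℂ),
      (mmseDenoiser (Dg M r) (Dg M s) ε' ((Prod.map e e p).1 + (Prod.map e e p).2) i
          - (Prod.map e e p).1 i) *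
        star (mmseDenoiser (Dg M r) (Dg M s) ε' ((Prod.map e e p).1 + (Prod.map e e p).2) j
          - (Prod.map e e p).1 j)
      = u i * u j *
        ((mmseDenoiser (Dg M r) (Dg M s) ε' (p.1 + p.2) (π i) - p.1 (π i)) *
          star (mmseDenoiser (Dg M r) (Dg M s) ε' (p.1 + p.2) (π j) - p.1 (π j))) := by
    rintro ⟨x, v⟩
    have hadd : e x + e v = e (x + v) := (sp_add u hu π x v).symm
    simp only [Prod.map_fst, Prod.map_snd]
    rw [hadd, den_sp r s ε' hs hrs u hu π hπ (x + v) i,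
      den_sp r s ε' hs hrs u hu π hπ (x + v) j]
    have hex : e x i = u i * x (π i) := rfl
    have hex' : e x j = u j * x (π j) := rfl
    rw [hex, hex', ← mul_sub, ← mul_sub, star_mul', pm_star (hu j)]
    ring
  calc ∫ p, _ ∂μ = ∫ p : ((Fin K × Fin M) → ℂ) × ((Fin K × Fin M) → ℂ),
        u i * u j *
        ((mmseDenoiser (Dg M r) (Dg M s) ε' (p.1 + p.2) (π i) - p.1 (π i)) *
          star (mmseDenoiser (Dg M r) (Dg M s) ε' (p.1 + p.2) (π j) - p.1 (π j))) ∂μ := by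
        exact integral_congr_ae (Filter.Eventually.of_forall hpt)
    _ = _ := integral_const_mul _ _

end Stmt2Aux

open Stmt2Aux

/-- **Corollary 1.** In the setting of the state evolution, if each
covariance has the form `Rₙ = bdiag(ρ_{1n}·I_M, …, ρ_{Kn}·I_M)` with `ρ_{kn} > 0`, then
for every `t` there are scalars `τ₁ᵗ, …, τ_Kᵗ > 0` with
`Σᵗ = bdiag(τ₁ᵗ·I_M, …, τ_Kᵗ·I_M)`. -/
theorem stmt2 (K M N : ℕ) (σ2 L : ℝ) (hσ2 : 0 < σ2) (hL : 0 < L)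
    (ε : Fin N → ℝ) (hε : ∀ n, 0 < ε n ∧ ε n < 1)
    (ρ : Fin K → Fin N → ℝ) (hρ : ∀ k n, 0 < ρ k n)
    (R : Fin N → Matrix (Fin K × Fin M) (Fin K × Fin M) ℂ)
    (hR : ∀ n, ∀ i j : Fin K × Fin M, R n i j = if i = j then (ρ i.1 n : ℂ) else 0) :
    ∀ t : ℕ, ∃ τ : Fin K → ℝ, (∀ k, 0 < τ k) ∧
      ∀ i j : Fin K × Fin M,
        stateSeq σ2 L ε R t i j = if i = j then (τ i.1 : ℂ) else 0 := by
  rcases Nat.eq_zero_or_pos M with hM | hM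
  · subst hM
    intro t
    exact ⟨fun _ => 1, fun _ => one_pos, fun i j => i.2.elim0⟩
  intro t
  induction t with
  | zero =>
    refine ⟨fun k => σ2 + (1 / L) * ∑ n, ρ k n, fun k => ?_, fun i j => ?_⟩
    · have h1 : 0 ≤ (1 / L) * ∑ n, ρ k n :=
        mul_nonneg (by positivity) (Finset.sum_nonneg fun n _ => (hρ k n).le)
      linarith
    · simp only [stateSeq, Matrix.add_apply, Matrix.smul_apply, Matrix.sum_apply,
        smul_eq_mul, hR]
      by_cases hij : i = j
      · subst hij
        simp only [Matrix.one_apply_eq, if_pos rfl, ↓reduceIte]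
        push_cast
        ring
      · simp [Matrix.one_apply_ne hij, if_neg hij]
  | succ t ih =>
    obtain ⟨τ, hτpos, hτ⟩ := ih
    have hRn : ∀ n, R n = Dg M (fun k => ((ρ k n : ℝ) : ℂ)) := by
      intro n
      ext i j
      rw [hR n i j]
      simp [Dg, Matrix.diagonal_apply]
    have hSt : stateSeq σ2 L ε R t = Dg M (fun k => ((τ k : ℝ) : ℂ)) := by
      ext i j
      rw [hτ i j]
      simp [Dg, Matrix.diagonal_apply]
    have hrne : ∀ n k, ((ρ k n : ℝ) : ℂ) ≠ 0 :=
      fun n k => Complex.ofReal_ne_zero.2 (ne_of_gt (hρ k n))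
    have hsne : ∀ k, ((τ k : ℝ) : ℂ) ≠ 0 :=
      fun k => Complex.ofReal_ne_zero.2 (ne_of_gt (hτpos k))
    have hrsne : ∀ n k, ((ρ k n : ℝ) : ℂ) + ((τ k : ℝ) : ℂ) ≠ 0 := by
      intro n k
      rw [← Complex.ofReal_add]
      exact Complex.ofReal_ne_zero.2 (ne_of_gt (add_pos (hρ k n) (hτpos k)))
    set a0 : Fin M := ⟨0, hM⟩ with ha0
    -- off-diagonal integrals vanish
    have hoff : ∀ (n : Fin N) (i j : Fin K × Fin M), i ≠ j →
        (∫ p : ((Fin K × Fin M) → ℂ) × ((Fin K × Fin M) → ℂ),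
          (mmseDenoiser (Dg M (fun k => ((ρ k n : ℝ) : ℂ))) (Dg M (fun k => ((τ k : ℝ) : ℂ)))
              (ε n) (p.1 + p.2) i - p.1 i) *
            star (mmseDenoiser (Dg M (fun k => ((ρ k n : ℝ) : ℂ)))
              (Dg M (fun k => ((τ k : ℝ) : ℂ))) (ε n) (p.1 + p.2) j - p.1 j)
          ∂((bgMeasure (Dg M (fun k => ((ρ k n : ℝ) : ℂ))) (ε n)).prod
            (gaussMeasure (Dg M (fun k => ((τ k : ℝ) : ℂ)))))) = 0 := by
      intro n i j hij
      have h := integral_sp (fun k => ((ρ k n : ℝ) : ℂ)) (fun k => ((τ k : ℝ) : ℂ)) (ε n)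
        (hrne n) hsne (hrsne n)
        (fun l => if l = i then (-1 : ℂ) else 1)
        (fun l => by by_cases h : l = i <;> simp [h])
        (Equiv.refl _) (fun l => rfl) i j
      simp only [Equiv.refl_apply, if_neg (Ne.symm hij), eq_self_iff_true, if_true] at h
      linear_combination h / 2
    -- diagonal integrals
    have hdiag : ∀ (n : Fin N) (k : Fin K) (a : Fin M),
        (∫ p : ((Fin K × Fin M) → ℂ) × ((Fin K × Fin M) → ℂ),
          (mmseDenoiser (Dg M (fun k => ((ρ k n : ℝ) : ℂ))) (Dg M (fun k => ((τ k : ℝ) : ℂ)))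
              (ε n) (p.1 + p.2) (k, a) - p.1 (k, a)) *
            star (mmseDenoiser (Dg M (fun k => ((ρ k n : ℝ) : ℂ)))
              (Dg M (fun k => ((τ k : ℝ) : ℂ))) (ε n) (p.1 + p.2) (k, a) - p.1 (k, a))
          ∂((bgMeasure (Dg M (fun k => ((ρ k n : ℝ) : ℂ))) (ε n)).prod
            (gaussMeasure (Dg M (fun k => ((τ k : ℝ) : ℂ))))))
        = (((∫ p : ((Fin K × Fin M) → ℂ) × ((Fin K × Fin M) → ℂ),
            Complex.normSq (mmseDenoiser (Dg M (fun k => ((ρ k n : ℝ) : ℂ)))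
              (Dg M (fun k => ((τ k : ℝ) : ℂ))) (ε n) (p.1 + p.2) (k, a0) - p.1 (k, a0))
          ∂((bgMeasure (Dg M (fun k => ((ρ k n : ℝ) : ℂ))) (ε n)).prod
            (gaussMeasure (Dg M (fun k => ((τ k : ℝ) : ℂ)))))) : ℝ) : ℂ) := by
      intro n k a
      have hπswap : ∀ l : Fin K × Fin M, ((Equiv.swap (k, a) (k, a0)) l).1 = l.1 := by
        intro l
        rcases eq_or_ne l (k, a) with h | h
        · subst h; rw [Equiv.swap_apply_left]
        · rcases eq_or_ne l (k, a0) with h2 | h2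
          · subst h2; rw [Equiv.swap_apply_right]
          · rw [Equiv.swap_apply_of_ne_of_ne h h2]
      have h := integral_sp (fun k => ((ρ k n : ℝ) : ℂ)) (fun k => ((τ k : ℝ) : ℂ)) (ε n)
        (hrne n) hsne (hrsne n)
        (fun _ => (1 : ℂ)) (fun _ => Or.inl rfl)
        (Equiv.swap (k, a) (k, a0)) hπswap (k, a) (k, a)
      simp only [Equiv.swap_apply_left, one_mul] at h
      rw [h]
      calc (∫ p : ((Fin K × Fin M) → ℂ) × ((Fin K × Fin M) → ℂ),
            (mmseDenoiser (Dg M (fun k => ((ρ k n : ℝ) : ℂ))) (Dg M (fun k => ((τ k : ℝ) : ℂ)))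
                (ε n) (p.1 + p.2) (k, a0) - p.1 (k, a0)) *
              star (mmseDenoiser (Dg M (fun k => ((ρ k n : ℝ) : ℂ)))
                (Dg M (fun k => ((τ k : ℝ) : ℂ))) (ε n) (p.1 + p.2) (k, a0) - p.1 (k, a0))
            ∂((bgMeasure (Dg M (fun k => ((ρ k n : ℝ) : ℂ))) (ε n)).prod
              (gaussMeasure (Dg M (fun k => ((τ k : ℝ) : ℂ))))))
          = ∫ p : ((Fin K × Fin M) → ℂ) × ((Fin K × Fin M) → ℂ),
            ((Complex.normSq (mmseDenoiser (Dg M (fun k => ((ρ k n : ℝ) : ℂ)))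
              (Dg M (fun k => ((τ k : ℝ) : ℂ))) (ε n) (p.1 + p.2) (k, a0) - p.1 (k, a0)) : ℝ) : ℂ)
            ∂((bgMeasure (Dg M (fun k => ((ρ k n : ℝ) : ℂ))) (ε n)).prod
              (gaussMeasure (Dg M (fun k => ((τ k : ℝ) : ℂ))))) := by
            apply integral_congr_ae
            apply Filter.Eventually.of_forall
            intro p
            exact Complex.mul_conj _
        _ = _ := integral_ofReal
    refine ⟨fun k => σ2 + (1 / L) * ∑ n,
      (∫ p : ((Fin K × Fin M) → ℂ) × ((Fin K × Fin M) → ℂ),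
            Complex.normSq (mmseDenoiser (Dg M (fun k => ((ρ k n : ℝ) : ℂ)))
              (Dg M (fun k => ((τ k : ℝ) : ℂ))) (ε n) (p.1 + p.2) (k, a0) - p.1 (k, a0))
          ∂((bgMeasure (Dg M (fun k => ((ρ k n : ℝ) : ℂ))) (ε n)).prod
            (gaussMeasure (Dg M (fun k => ((τ k : ℝ) : ℂ)))))), fun k => ?_, fun i j => ?_⟩
    · have h1 : 0 ≤ ∑ n, (∫ p : ((Fin K × Fin M) → ℂ) × ((Fin K × Fin M) → ℂ),
            Complex.normSq (mmseDenoiser (Dg M (fun k => ((ρ k n : ℝ) : ℂ)))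
              (Dg M (fun k => ((τ k : ℝ) : ℂ))) (ε n) (p.1 + p.2) (k, a0) - p.1 (k, a0))
          ∂((bgMeasure (Dg M (fun k => ((ρ k n : ℝ) : ℂ))) (ε n)).prod
            (gaussMeasure (Dg M (fun k => ((τ k : ℝ) : ℂ)))))) :=
        Finset.sum_nonneg fun n _ =>
          integral_nonneg fun p => Complex.normSq_nonneg _
      have h2 : 0 ≤ (1 / L) := by positivity
      nlinarith
    · simp only [stateSeq, hRn, hSt, Matrix.add_apply, Matrix.smul_apply, Matrix.sum_apply,
        Matrix.of_apply, smul_eq_mul]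
      by_cases hij : i = j
      · subst hij
        obtain ⟨k, a⟩ := i
        rw [Matrix.one_apply_eq, if_pos rfl]
        rw [Finset.sum_congr rfl fun n _ => hdiag n k a]
        push_cast
        ring
      · rw [Matrix.one_apply_ne hij, if_neg hij,
          Finset.sum_congr rfl fun n _ => hoff n i j hij]
        simp

end
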